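/- Assume the stability condition. On the countable state space of finite lists of customer types, define the Markov transition kernel K: from w, with probability α_c = λ_c/(λ̄+μ̄) append a customer of type c at the end; with probability β_s = μ_s/(λ̄+μ̄) remove the first entry of w compatible with server type s if such an entry exists, and otherwise leave w unchanged. Then the probability measure π obtained by normalizing π₀(c^1,…,c^L) = ∏_{ℓ=1}^{L} λ_{c^ℓ}/μ_{S({c^1,…,c^ℓ})} is a stationary distribution of K, i.e. Σ_{w'} π(w')·K(w', w) = π(w) for every list w. -/

import Mathlib

open Finset

/-- Sum of service rates over a finite set of server types. -/
def muS {S : Type*} (mu : S → ℝ) (B : Finset S) : ℝ := ∑ s ∈ B, mu s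

/-- The set of server types compatible with at least one customer type in the list `w`. -/
def SsetL {C S : Type*} [Fintype S] (R : C → S → Prop) [∀ c s, Decidable (R c s)]
    (w : List C) : Finset S := Finset.univ.filter fun s => ∃ c ∈ w, R c s

/-- The set of server types compatible with at least one customer type in `A`. -/
def SsetF {C S : Type*} [Fintype S] (R : C → S → Prop) [∀ c s, Decidable (R c s)]
    (A : Finset C) : Finset S := Finset.univ.filter fun s => ∃ c ∈ A, R c s

/-- The unnormalized stationary weight
`qweight R lam mu [] (c^1,…,c^L) = ∏_{ℓ=1}^{L} λ_{c^ℓ}/μ_{S({c^1,…,c^ℓ})}`. -/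
noncomputable def qweight {C S : Type*} [Fintype S]
    (R : C → S → Prop) [∀ c s, Decidable (R c s)]
    (lam : C → ℝ) (mu : S → ℝ) : List C → List C → ℝ
  | _, [] => 1
  | pre, c :: w =>
      (lam c / muS mu (SsetL R (pre ++ [c]))) * qweight R lam mu (pre ++ [c]) w

/-- Remove from a list of customer types the first entry compatible with server type `s`
(if any). -/
def removeFirst {C S : Type*} (R : C → S → Prop) [∀ c s, Decidable (R c s)]
    (s : S) : List C → List C
  | [] => []
  | c :: w => if R c s then w else c :: removeFirst R s w

/-- The transition kernel of the FCFS infinite directed matching chain `X^{↓∞}`: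
with probability `α_c = λ_c/(λ̄+μ̄)` append a customer of type `c`; with probability
`β_s = μ_s/(λ̄+μ̄)` remove the first entry compatible with `s` (no change if none). -/
noncomputable def kernelK {C S : Type*} [Fintype C] [Fintype S] [DecidableEq C]
    (R : C → S → Prop) [∀ c s, Decidable (R c s)]
    (lam : C → ℝ) (mu : S → ℝ) (w w' : List C) : ℝ :=
  (∑ c : C, if w' = w ++ [c]
      then lam c / ((∑ c' : C, lam c') + (∑ s' : S, mu s')) else 0) +
  (∑ s : S, if w' = removeFirst R s w
      then mu s / ((∑ c' : C, lam c') + (∑ s' : S, mu s')) else 0)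


set_option linter.unusedSectionVars false

section Aux

variable {C S : Type*} [Fintype C] [Fintype S] [DecidableEq C]
  (R : C → S → Prop) [∀ c s, Decidable (R c s)] (lam : C → ℝ) (mu : S → ℝ)

lemma mem_SsetL {s : S} {l : List C} : s ∈ SsetL R l ↔ ∃ c ∈ l, R c s := by
  simp [SsetL]

lemma SsetL_congr {l₁ l₂ : List C} (h : ∀ x, x ∈ l₁ ↔ x ∈ l₂) :
    SsetL R l₁ = SsetL R l₂ := by
  ext s; simp only [mem_SsetL]
  exact ⟨fun ⟨c, hc, hR⟩ => ⟨c, (h c).mp hc, hR⟩, fun ⟨c, hc, hR⟩ => ⟨c, (h c).mpr hc, hR⟩⟩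

lemma SsetL_nil : SsetL R ([] : List C) = (∅ : Finset S) := by
  ext s; simp [mem_SsetL]

lemma muS_SsetL_pos (hmu : ∀ s, 0 < mu s)
    (hScne : ∀ c : C, (Finset.univ.filter fun s => R c s).Nonempty) {l : List C} {c : C} (hc : c ∈ l) :
    0 < muS mu (SsetL R l) := by
  apply Finset.sum_pos (fun s _ => hmu s)
  obtain ⟨s, hs⟩ := hScne c
  exact ⟨s, mem_SsetL R |>.mpr ⟨c, hc, (Finset.mem_filter.mp hs).2⟩⟩

lemma qweight_congr {pre₁ pre₂ : List C} (h : ∀ x, x ∈ pre₁ ↔ x ∈ pre₂) (w : List C) :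
    qweight R lam mu pre₁ w = qweight R lam mu pre₂ w := by
  induction w generalizing pre₁ pre₂ with
  | nil => rfl
  | cons a w ih =>
      have hm : ∀ x, x ∈ pre₁ ++ [a] ↔ x ∈ pre₂ ++ [a] := by
        intro x; simp [h x]
      rw [qweight, qweight, SsetL_congr R hm, ih hm]

lemma qweight_pos (hlam : ∀ c, 0 < lam c) (hmu : ∀ s, 0 < mu s)
    (hScne : ∀ c : C, (Finset.univ.filter fun s => R c s).Nonempty) (pre w : List C) : 0 < qweight R lam mu pre w := by
  induction w generalizing pre with
  | nil => exact one_pos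
  | cons a w ih =>
      rw [qweight]
      exact mul_pos (div_pos (hlam a)
        (muS_SsetL_pos R mu hmu hScne (l := pre ++ [a]) (c := a) (by simp))) (ih _)

lemma qweight_concat (w : List C) (c : C) : ∀ pre,
    qweight R lam mu pre (w ++ [c])
      = qweight R lam mu pre w * (lam c / muS mu (SsetL R (pre ++ w ++ [c]))) := by
  induction w with
  | nil => intro pre; simp [qweight]
  | cons a w ih =>
      intro pre
      rw [List.cons_append, qweight, qweight, ih (pre ++ [a])]
      simp [List.append_assoc]
      ring

end Aux

section Key

variable {C S : Type*} [Fintype C] [Fintype S] [DecidableEq C]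
  (R : C → S → Prop) [∀ c s, Decidable (R c s)] (lam : C → ℝ) (mu : S → ℝ)

/-- `rp pre w c = ∏_{ℓ=1}^{|w|} μ_{S(pre ++ w.take ℓ)} / μ_{S(pre ++ [c] ++ w.take ℓ)}`. -/
noncomputable def rp (R : C → S → Prop) [∀ c s, Decidable (R c s)] (mu : S → ℝ) :
    List C → List C → C → ℝ
  | _, [], _ => 1
  | pre, a :: w, c =>
      (muS mu (SsetL R (pre ++ [a])) / muS mu (SsetL R (pre ++ [c] ++ [a]))) *
        rp R mu (pre ++ [a]) w c

lemma qweight_prefix_cons (hlam : ∀ c, 0 < lam c) (hmu : ∀ s, 0 < mu s)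
    (hScne : ∀ c : C, (Finset.univ.filter fun s => R c s).Nonempty)
    (w : List C) : ∀ (pre : List C) (c : C),
    qweight R lam mu (pre ++ [c]) w = qweight R lam mu pre w * rp R mu pre w c := by
  induction w with
  | nil => intro pre c; simp [qweight, rp]
  | cons a w ih =>
      intro pre c
      have hμ : muS mu (SsetL R (pre ++ [a])) ≠ 0 :=
        (muS_SsetL_pos R mu hmu hScne (c := a) (by simp)).ne'
      have hν : muS mu (SsetL R (pre ++ [c] ++ [a])) ≠ 0 :=
        (muS_SsetL_pos R mu hmu hScne (c := a) (by simp)).ne'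
      have hcongr2 : qweight R lam mu (pre ++ [c] ++ [a]) w
          = qweight R lam mu (pre ++ [a] ++ [c]) w :=
        qweight_congr R lam mu (by intro x; simp; try tauto) w
      rw [qweight, rp, qweight, List.append_assoc pre [c] [a]]
      rw [← List.append_assoc pre [c] [a], hcongr2, ih (pre ++ [a]) c]
      simp only [List.append_assoc, List.cons_append, List.nil_append] at hμ hν ⊢
      field_simp

lemma keyIns (hlam : ∀ c, 0 < lam c) (hmu : ∀ s, 0 < mu s)
    (hScne : ∀ c : C, (Finset.univ.filter fun s => R c s).Nonempty)
    (w : List C) (c : C) : ∀ pre : List C,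
    ∑ k ∈ Finset.range (w.length + 1),
        qweight R lam mu pre (w.insertIdx k c) *
          (muS mu (SsetL R (pre ++ w.take k ++ [c])) - muS mu (SsetL R (pre ++ w.take k)))
      = lam c * qweight R lam mu pre w *
          (1 - muS mu (SsetL R pre) / muS mu (SsetL R (pre ++ [c])) * rp R mu pre w c) := by
  induction w with
  | nil =>
      intro pre
      have hν : muS mu (SsetL R (pre ++ [c])) ≠ 0 :=
        (muS_SsetL_pos R mu hmu hScne (c := c) (by simp)).ne'
      simp only [List.length_nil, zero_add, Finset.sum_range_one, List.insertIdx_zero,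
        List.take_zero, List.append_nil, qweight, rp, mul_one]
      field_simp
  | cons a w ih =>
      intro pre
      have hμ : muS mu (SsetL R (pre ++ [a])) ≠ 0 :=
        (muS_SsetL_pos R mu hmu hScne (c := a) (by simp)).ne'
      have hν : muS mu (SsetL R (pre ++ [c])) ≠ 0 :=
        (muS_SsetL_pos R mu hmu hScne (c := c) (by simp)).ne'
      have hν' : muS mu (SsetL R (pre ++ [c] ++ [a])) ≠ 0 :=
        (muS_SsetL_pos R mu hmu hScne (c := a) (by simp)).ne'
      have hq' : qweight R lam mu (pre ++ [a]) w ≠ 0 :=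
        (qweight_pos R lam mu hlam hmu hScne _ _).ne'
      have hlen : (a :: w).length = w.length + 1 := rfl
      rw [hlen, Finset.sum_range_succ']
      have hshift : ∀ k ∈ Finset.range (w.length + 1),
          qweight R lam mu pre ((a :: w).insertIdx (k + 1) c) *
            (muS mu (SsetL R (pre ++ (a :: w).take (k + 1) ++ [c]))
              - muS mu (SsetL R (pre ++ (a :: w).take (k + 1))))
          = (lam a / muS mu (SsetL R (pre ++ [a]))) *
            (qweight R lam mu (pre ++ [a]) (w.insertIdx k c) *
              (muS mu (SsetL R ((pre ++ [a]) ++ w.take k ++ [c]))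
                - muS mu (SsetL R ((pre ++ [a]) ++ w.take k)))) := by
        intro k _
        rw [List.insertIdx_succ_cons, List.take_succ_cons, qweight]
        rw [SsetL_congr R (l₁ := pre ++ (a :: List.take k w) ++ [c])
          (l₂ := (pre ++ [a]) ++ List.take k w ++ [c]) (by intro x; simp; try tauto)]
        rw [SsetL_congr R (l₁ := pre ++ (a :: List.take k w))
          (l₂ := (pre ++ [a]) ++ List.take k w) (by intro x; simp; try tauto)]
        ring
      rw [Finset.sum_congr rfl hshift, ← Finset.mul_sum, ih (pre ++ [a])]
      rw [List.insertIdx_zero]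
      have hq0 : qweight R lam mu pre (c :: a :: w)
          = (lam c / muS mu (SsetL R (pre ++ [c]))) *
              (qweight R lam mu pre (a :: w) * rp R mu pre (a :: w) c) := by
        rw [qweight, qweight_prefix_cons R lam mu hlam hmu hScne _ pre c]
      have hrupd : rp R mu pre (a :: w) c
          = (muS mu (SsetL R (pre ++ [a])) / muS mu (SsetL R (pre ++ [c] ++ [a]))) *
              rp R mu (pre ++ [a]) w c := rfl
      have hcongr : SsetL R (pre ++ [a] ++ [c]) = SsetL R (pre ++ [c] ++ [a]) :=
        SsetL_congr R (by intro x; simp; try tauto)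
      rw [hq0, hrupd, hcongr]
      rw [show qweight R lam mu pre (a :: w)
            = (lam a / muS mu (SsetL R (pre ++ [a]))) * qweight R lam mu (pre ++ [a]) w
          from rfl]
      simp only [List.take_zero, List.append_nil]
      simp only [List.append_assoc, List.cons_append, List.nil_append] at hμ hν hν' ⊢
      field_simp
      ring

end Key

section RF

variable {C S : Type*} [Fintype C] [Fintype S] [DecidableEq C]
  (R : C → S → Prop) [∀ c s, Decidable (R c s)] (lam : C → ℝ) (mu : S → ℝ)

lemma keyIns0 (hlam : ∀ c, 0 < lam c) (hmu : ∀ s, 0 < mu s)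
    (hScne : ∀ c : C, (Finset.univ.filter fun s => R c s).Nonempty)
    (w : List C) (c : C) :
    ∑ k ∈ Finset.range (w.length + 1),
        qweight R lam mu [] (w.insertIdx k c) *
          (muS mu (SsetL R (w.take k ++ [c])) - muS mu (SsetL R (w.take k)))
      = lam c * qweight R lam mu [] w := by
  have h := keyIns R lam mu hlam hmu hScne w c []
  simp only [List.nil_append] at h
  rw [h, SsetL_nil]
  simp [muS]

lemma removeFirst_eq_self {s : S} {w : List C} (h : ∀ a ∈ w, ¬ R a s) :
    removeFirst R s w = w := by
  induction w with
  | nil => rfl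
  | cons a w ih =>
      rw [removeFirst, if_neg (h a (by simp))]
      rw [ih (fun b hb => h b (by simp [hb]))]

lemma removeFirst_insertIdx {s : S} (c : C) : ∀ (k : ℕ) (w : List C), R c s →
    (∀ a ∈ w.take k, ¬ R a s) → k ≤ w.length →
    removeFirst R s (w.insertIdx k c) = w := by
  intro k
  induction k with
  | zero => intro w hc _ _; rw [List.insertIdx_zero, removeFirst, if_pos hc]
  | succ k ih =>
      intro w hc hpre hk
      match w with
      | [] => simp at hk
      | a :: w =>
          rw [List.insertIdx_succ_cons, removeFirst,
            if_neg (hpre a (by simp [List.take_succ_cons]))]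
          rw [ih w hc (fun b hb => hpre b (by simp [List.take_succ_cons, hb]))
            (Nat.le_of_succ_le_succ hk)]

lemma removeFirst_preimage {s : S} : ∀ (u w : List C), removeFirst R s u = w →
    (u = w ∧ ∀ a ∈ w, ¬ R a s) ∨
      ∃ k c, k ≤ w.length ∧ R c s ∧ (∀ a ∈ w.take k, ¬ R a s) ∧ u = w.insertIdx k c := by
  intro u
  induction u with
  | nil =>
      intro w h
      rw [removeFirst] at h
      exact Or.inl ⟨h.symm ▸ rfl, by rw [← h]; simp⟩
  | cons b t ih =>
      intro w h
      rw [removeFirst] at h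
      by_cases hb : R b s
      · rw [if_pos hb] at h
        subst h
        exact Or.inr ⟨0, b, Nat.zero_le _, hb, by simp, by rw [List.insertIdx_zero]⟩
      · rw [if_neg hb] at h
        subst h
        rcases ih (removeFirst R s t) rfl with ⟨h1, h2⟩ | ⟨k, c, hk, hc, hpre, hins⟩
        · refine Or.inl ⟨by rw [← h1], ?_⟩
          intro a ha
          rcases List.mem_cons.mp ha with rfl | ha
          · exact hb
          · exact h2 a ha
        · refine Or.inr ⟨k + 1, c, Nat.succ_le_succ hk, hc, ?_, ?_⟩
          · intro a ha
            rw [List.take_succ_cons] at ha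
            rcases List.mem_cons.mp ha with rfl | ha
            · exact hb
            · exact hpre a ha
          · rw [List.insertIdx_succ_cons, ← hins]

lemma insertIdx_inj {s : S} {w : List C} {k k' : ℕ} {c c' : C}
    (hk : k ≤ w.length) (hk' : k' ≤ w.length)
    (hc : R c s) (hc' : R c' s)
    (hpre : ∀ a ∈ w.take k, ¬ R a s) (hpre' : ∀ a ∈ w.take k', ¬ R a s)
    (heq : w.insertIdx k c = w.insertIdx k' c') : k = k' ∧ c = c' := by
  have key : ∀ (k k' : ℕ) (c c' : C), k ≤ w.length → k' ≤ w.length → R c s →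
      (∀ a ∈ w.take k', ¬ R a s) → w.insertIdx k c = w.insertIdx k' c' → ¬ k < k' := by
    intro k k' c c' hk hk' hc hpre' heq hlt
    have h1 : (w.insertIdx k c)[k]'(by rw [List.length_insertIdx_of_le_length hk]; omega) = c :=
      List.getElem_insertIdx_self _
    have hkw : k < w.length := lt_of_lt_of_le hlt hk'
    have h2 : (w.insertIdx k' c')[k]'(by rw [List.length_insertIdx_of_le_length hk']; omega) = w[k] :=
      List.getElem_insertIdx_of_lt hlt _
    have h3 : (w.insertIdx k c)[k]'(by rw [List.length_insertIdx_of_le_length hk]; omega)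
        = (w.insertIdx k' c')[k]'(by rw [List.length_insertIdx_of_le_length hk']; omega) :=
      List.getElem_of_eq heq _
    have hcw : c = w[k] := by rw [← h1, h3, h2]
    have hmem : w[k] ∈ w.take k' := by
      have : (w.take k')[k]'(by rw [List.length_take]; omega) = w[k] := List.getElem_take
      rw [← this]; exact List.getElem_mem _
    exact hpre' w[k] hmem (hcw ▸ hc)
  rcases lt_trichotomy k k' with h | h | h
  · exact absurd h (key k k' c c' hk hk' hc hpre' heq)
  · subst h
    refine ⟨rfl, ?_⟩
    have h1 : (w.insertIdx k c)[k]'(by rw [List.length_insertIdx_of_le_length hk]; omega) = c :=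
      List.getElem_insertIdx_self _
    have h2 : (w.insertIdx k c')[k]'(by rw [List.length_insertIdx_of_le_length hk]; omega) = c' :=
      List.getElem_insertIdx_self _
    have h3 : (w.insertIdx k c)[k]'(by rw [List.length_insertIdx_of_le_length hk]; omega)
        = (w.insertIdx k c')[k]'(by rw [List.length_insertIdx_of_le_length hk]; omega) :=
      List.getElem_of_eq heq _
    rw [← h1, h3, h2]
  · exact absurd h (key k' k c' c hk' hk hc' hpre heq.symm)

end RF

theorem stmt6 {C S : Type*} [Fintype C] [Fintype S] [Nonempty C] [Nonempty S]
    [DecidableEq C]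
    (R : C → S → Prop) [∀ c s, Decidable (R c s)]
    (lam : C → ℝ) (mu : S → ℝ)
    (hlam : ∀ c, 0 < lam c) (hmu : ∀ s, 0 < mu s)
    (hScne : ∀ c : C, (Finset.univ.filter fun s => R c s).Nonempty)
    (hstab : ∀ A : Finset C, A.Nonempty → (∑ c ∈ A, lam c) < muS mu (SsetF R A)) :
    ∀ w : List C,
      (∑' w' : List C,
          (qweight R lam mu [] w' / (∑' u : List C, qweight R lam mu [] u)) *
            kernelK (S := S) R lam mu w' w)
        = qweight R lam mu [] w / (∑' u : List C, qweight R lam mu [] u) := by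
  intro w
  classical
  set D : ℝ := (∑ c' : C, lam c') + (∑ s' : S, mu s') with hDdef
  have hD : 0 < D := add_pos
    (Finset.sum_pos (fun c _ => hlam c) Finset.univ_nonempty)
    (Finset.sum_pos (fun s _ => hmu s) Finset.univ_nonempty)
  set q : List C → ℝ := qweight R lam mu [] with hqdef
  suffices hmain : ∑' w' : List C, q w' * kernelK (S := S) R lam mu w' w = q w by
    have h1 : ∀ w' : List C,
        q w' / (∑' u : List C, q u) * kernelK (S := S) R lam mu w' w
          = (∑' u : List C, q u)⁻¹ * (q w' * kernelK (S := S) R lam mu w' w) := by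
      intro w'; ring
    rw [tsum_congr h1, tsum_mul_left, hmain, inv_mul_eq_div]
  -- the two components of the kernel
  set fA : List C → ℝ := fun w' => ∑ c : C, if w = w' ++ [c] then q w' * (lam c / D) else 0
    with hfAdef
  set fB : S → List C → ℝ := fun s w' =>
    if w = removeFirst R s w' then q w' * (mu s / D) else 0 with hfBdef
  have hker : ∀ w', q w' * kernelK (S := S) R lam mu w' w = fA w' + ∑ s : S, fB s w' := by
    intro w'
    rw [kernelK, mul_add, Finset.mul_sum, Finset.mul_sum, hfAdef, hfBdef]
    simp only [← hDdef, mul_ite, mul_zero]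
  -- the finite support set
  set F : Finset (List C) := insert w (insert w.dropLast
    ((Finset.univ : Finset (C × Fin (w.length + 1))).image
      fun p => w.insertIdx (p.2 : ℕ) p.1)) with hFdef
  have hFA : ∀ w' ∉ F, fA w' = 0 := by
    intro w' hw'
    apply Finset.sum_eq_zero
    intro c _
    rw [if_neg]
    intro hcon
    apply hw'
    have hv : w' = w.dropLast := by rw [hcon, List.dropLast_concat]
    rw [hFdef]
    exact Finset.mem_insert.mpr (Or.inr (Finset.mem_insert.mpr (Or.inl hv)))
  have hFB : ∀ s : S, ∀ w' ∉ F, fB s w' = 0 := by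
    intro s w' hw'
    rw [hfBdef]
    simp only
    rw [if_neg]
    intro hcon
    apply hw'
    rcases removeFirst_preimage R w' w hcon.symm with ⟨h1, _⟩ | ⟨k, c, hk, _, _, hins⟩
    · rw [hFdef, h1]; exact Finset.mem_insert_self _ _
    · rw [hFdef]
      refine Finset.mem_insert.mpr (Or.inr (Finset.mem_insert.mpr (Or.inr ?_)))
      refine Finset.mem_image.mpr ⟨(c, ⟨k, Nat.lt_succ_of_le hk⟩), Finset.mem_univ _, ?_⟩
      exact hins.symm
  have hsumA : Summable fA := summable_of_ne_finset_zero hFA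
  have hsumB : ∀ s : S, Summable (fB s) := fun s => summable_of_ne_finset_zero (hFB s)
  have hsplit : ∑' w' : List C, q w' * kernelK (S := S) R lam mu w' w
      = (∑' w', fA w') + ∑ s : S, ∑' w', fB s w' := by
    rw [tsum_congr hker, Summable.tsum_add hsumA (summable_sum fun s _ => hsumB s),
      Summable.tsum_finsetSum fun s _ => hsumB s]
  rw [hsplit]
  have hA : (∑' w', fA w') = q w * muS mu (SsetL R w) / D := by
    rcases List.eq_nil_or_concat w with hw | ⟨v, c₀, hw⟩
    · subst hw
      have hz : ∀ w', fA w' = 0 := by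
        intro w'
        apply Finset.sum_eq_zero
        intro c _
        rw [if_neg]
        simp
      rw [tsum_congr hz, tsum_zero, SsetL_nil]
      simp [muS]
    · rw [List.concat_eq_append] at hw
      subst hw
      have hM : 0 < muS mu (SsetL R (v ++ [c₀])) :=
        muS_SsetL_pos R mu hmu hScne (c := c₀) (by simp)
      have hfa : ∀ w', fA w' = if w' = v then q v * (lam c₀ / D) else 0 := by
        intro w'
        by_cases h : w' = v
        · subst h
          rw [if_pos rfl]
          have hcond : ∀ c : C, (w' ++ [c₀] = w' ++ [c]) ↔ (c = c₀) := by
            intro c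
            rw [List.append_right_inj]
            simp [eq_comm]
          calc fA w' = ∑ c : C, if c = c₀ then q w' * (lam c / D) else 0 :=
                Finset.sum_congr rfl (fun c _ => if_congr (hcond c) rfl rfl)
            _ = q w' * (lam c₀ / D) := by
                rw [Finset.sum_ite_eq' Finset.univ c₀ (fun c => q w' * (lam c / D)),
                  if_pos (Finset.mem_univ _)]
        · rw [if_neg h]
          apply Finset.sum_eq_zero
          intro c _
          rw [if_neg]
          intro hcon
          exact h (List.append_inj' hcon rfl).1.symm
      rw [tsum_congr hfa, tsum_ite_eq]
      have hqc : q (v ++ [c₀]) = q v * (lam c₀ / muS mu (SsetL R (v ++ [c₀]))) := by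
        rw [hqdef]
        have := qweight_concat R lam mu v c₀ []
        simpa using this
      rw [hqc]
      field_simp
      try ring
  have hqpos : ∀ u : List C, 0 < q u := fun u => qweight_pos R lam mu hlam hmu hScne [] u
  have hB : ∀ s : S, (∑' w', fB s w')
      = (if ∀ a ∈ w, ¬ R a s then q w * (mu s / D) else 0)
        + ∑ p : C × Fin (w.length + 1),
            (if R p.1 s ∧ (∀ a ∈ w.take (p.2 : ℕ), ¬ R a s)
              then q (w.insertIdx (p.2 : ℕ) p.1) * (mu s / D) else 0) := by
    intro s
    have key : (∑' w', fB s w') = ∑' x : Option (C × Fin (w.length + 1)),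
        (Option.elim x (if ∀ a ∈ w, ¬ R a s then q w * (mu s / D) else 0)
          (fun p => if R p.1 s ∧ (∀ a ∈ w.take (p.2 : ℕ), ¬ R a s)
              then q (w.insertIdx (p.2 : ℕ) p.1) * (mu s / D) else 0)) := by
      refine tsum_eq_tsum_of_ne_zero_bij
        (fun x => Option.elim x.1 w (fun p => w.insertIdx (p.2 : ℕ) p.1)) ?_ ?_ ?_
      · rintro ⟨xv, hx⟩ ⟨yv, hy⟩ hxy
        rcases xv with _ | p <;> rcases yv with _ | p'
        · rfl
        · exfalso
          have hlen := congrArg List.length hxy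
          simp only [Option.elim] at hlen
          rw [List.length_insertIdx_of_le_length (Fin.is_le p'.2)] at hlen
          omega
        · exfalso
          have hlen := congrArg List.length hxy
          simp only [Option.elim] at hlen
          rw [List.length_insertIdx_of_le_length (Fin.is_le p.2)] at hlen
          omega
        · have hcp : R p.1 s ∧ ∀ a ∈ w.take (p.2 : ℕ), ¬ R a s := by
            by_contra hcon
            exact hx (if_neg hcon)
          have hcp' : R p'.1 s ∧ ∀ a ∈ w.take (p'.2 : ℕ), ¬ R a s := by
            by_contra hcon
            exact hy (if_neg hcon)
          have hxy' : w.insertIdx (p.2 : ℕ) p.1 = w.insertIdx (p'.2 : ℕ) p'.1 := hxy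
          obtain ⟨hk, hc⟩ := insertIdx_inj R (Fin.is_le p.2) (Fin.is_le p'.2)
            hcp.1 hcp'.1 hcp.2 hcp'.2 hxy'
          apply Subtype.ext
          simp only
          congr 1
          exact Prod.ext hc (Fin.ext hk)
      · intro w' hw'
        have hcond : w = removeFirst R s w' := by
          by_contra hcon
          exact hw' (if_neg hcon)
        rcases removeFirst_preimage R w' w hcond.symm with ⟨h1, h2⟩ | ⟨k, c, hk, hc, hpre, hins⟩
        · have hgn : (if ∀ a ∈ w, ¬ R a s then q w * (mu s / D) else 0) ≠ 0 := by
            rw [if_pos h2]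
            exact (mul_pos (hqpos w) (div_pos (hmu s) hD)).ne'
          exact ⟨⟨none, hgn⟩, h1.symm⟩
        · have hgn : (if R (c, (⟨k, Nat.lt_succ_of_le hk⟩ : Fin (w.length + 1))).1 s ∧
              (∀ a ∈ w.take ((c, (⟨k, Nat.lt_succ_of_le hk⟩ : Fin (w.length + 1))).2 : ℕ), ¬ R a s)
              then q (w.insertIdx (((c, (⟨k, Nat.lt_succ_of_le hk⟩ : Fin (w.length + 1))).2 : ℕ))
                (c, (⟨k, Nat.lt_succ_of_le hk⟩ : Fin (w.length + 1))).1) * (mu s / D) else 0) ≠ 0 := by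
            rw [if_pos ⟨hc, hpre⟩]
            exact (mul_pos (hqpos _) (div_pos (hmu s) hD)).ne'
          exact ⟨⟨some (c, ⟨k, Nat.lt_succ_of_le hk⟩), hgn⟩, hins.symm⟩
      · rintro ⟨xv, hx⟩
        rcases xv with _ | p
        · have h2 : ∀ a ∈ w, ¬ R a s := by
            by_contra hcon
            exact hx (if_neg hcon)
          show (if w = removeFirst R s w then q w * (mu s / D) else 0)
            = (if ∀ a ∈ w, ¬ R a s then q w * (mu s / D) else 0)
          rw [removeFirst_eq_self R h2, if_pos rfl, if_pos h2]
        · have hcp : R p.1 s ∧ ∀ a ∈ w.take (p.2 : ℕ), ¬ R a s := by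
            by_contra hcon
            exact hx (if_neg hcon)
          show (if w = removeFirst R s (w.insertIdx (p.2 : ℕ) p.1)
              then q (w.insertIdx (p.2 : ℕ) p.1) * (mu s / D) else 0)
            = (if R p.1 s ∧ (∀ a ∈ w.take (p.2 : ℕ), ¬ R a s)
              then q (w.insertIdx (p.2 : ℕ) p.1) * (mu s / D) else 0)
          rw [removeFirst_insertIdx R p.1 (p.2 : ℕ) w hcp.1 hcp.2 (Fin.is_le p.2),
            if_pos rfl, if_pos hcp]
    rw [key, tsum_fintype, Fintype.sum_option]
    rfl
  have hN : ∑ s : S, (if ∀ a ∈ w, ¬ R a s then q w * (mu s / D) else 0)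
      = q w * (((∑ s' : S, mu s') - muS mu (SsetL R w)) / D) := by
    have hpull : ∀ T : Finset S, ∑ s ∈ T, q w * (mu s / D) = q w * ((∑ s ∈ T, mu s) / D) := by
      intro T
      rw [Finset.sum_div, Finset.mul_sum]
    have h1 : ∀ s : S, (if ∀ a ∈ w, ¬ R a s then q w * (mu s / D) else 0)
        = if s ∈ Finset.univ \ SsetL R w then q w * (mu s / D) else 0 := by
      intro s
      refine if_congr ?_ rfl rfl
      simp [mem_SsetL]
    rw [Finset.sum_congr rfl (fun s _ => h1 s), Finset.sum_ite_mem, Finset.univ_inter,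
      hpull, Finset.sum_sdiff_eq_sub (Finset.subset_univ _)]
    rfl
  have hI : ∑ s : S, ∑ p : C × Fin (w.length + 1),
        (if R p.1 s ∧ (∀ a ∈ w.take (p.2 : ℕ), ¬ R a s)
          then q (w.insertIdx (p.2 : ℕ) p.1) * (mu s / D) else 0)
      = (∑ c' : C, lam c') * q w / D := by
    rw [Finset.sum_comm]
    have hinner : ∀ p : C × Fin (w.length + 1),
        ∑ s : S, (if R p.1 s ∧ (∀ a ∈ w.take (p.2 : ℕ), ¬ R a s)
            then q (w.insertIdx (p.2 : ℕ) p.1) * (mu s / D) else 0)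
        = q (w.insertIdx (p.2 : ℕ) p.1) *
            ((muS mu (SsetL R (w.take (p.2 : ℕ) ++ [p.1]))
              - muS mu (SsetL R (w.take (p.2 : ℕ)))) / D) := by
      intro p
      obtain ⟨c, k⟩ := p
      simp only
      have hsub : SsetL R (w.take (k : ℕ)) ⊆ SsetL R (w.take (k : ℕ) ++ [c]) := by
        intro s hs
        rw [mem_SsetL] at hs ⊢
        obtain ⟨a, ha, hR⟩ := hs
        exact ⟨a, by simp [ha], hR⟩
      have hcond : ∀ s : S, (R c s ∧ (∀ a ∈ w.take (k : ℕ), ¬ R a s))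
          ↔ s ∈ SsetL R (w.take (k : ℕ) ++ [c]) \ SsetL R (w.take (k : ℕ)) := by
        intro s
        rw [Finset.mem_sdiff, mem_SsetL, mem_SsetL]
        constructor
        · rintro ⟨h1, h2⟩
          refine ⟨⟨c, by simp, h1⟩, ?_⟩
          rintro ⟨a, ha, hR⟩
          exact h2 a ha hR
        · rintro ⟨⟨a, ha, hR⟩, h2⟩
          rcases List.mem_append.mp ha with ha | ha
          · exact absurd ⟨a, ha, hR⟩ h2
          · have haa : a = c := by simpa using ha
            subst haa
            exact ⟨hR, fun b hb hRb => h2 ⟨b, hb, hRb⟩⟩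
      calc ∑ s : S, (if R c s ∧ (∀ a ∈ w.take (k : ℕ), ¬ R a s)
              then q (w.insertIdx (k : ℕ) c) * (mu s / D) else 0)
          = ∑ s : S, (if s ∈ SsetL R (w.take (k : ℕ) ++ [c]) \ SsetL R (w.take (k : ℕ))
              then q (w.insertIdx (k : ℕ) c) * (mu s / D) else 0) :=
            Finset.sum_congr rfl (fun s _ => if_congr (hcond s) rfl rfl)
        _ = ∑ s ∈ SsetL R (w.take (k : ℕ) ++ [c]) \ SsetL R (w.take (k : ℕ)),
              q (w.insertIdx (k : ℕ) c) * (mu s / D) := by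
            rw [Finset.sum_ite_mem, Finset.univ_inter]
        _ = q (w.insertIdx (k : ℕ) c) *
              ((∑ s ∈ SsetL R (w.take (k : ℕ) ++ [c]) \ SsetL R (w.take (k : ℕ)), mu s) / D) := by
            rw [Finset.sum_div, Finset.mul_sum]
        _ = q (w.insertIdx (k : ℕ) c) *
              ((muS mu (SsetL R (w.take (k : ℕ) ++ [c])) - muS mu (SsetL R (w.take (k : ℕ)))) / D) := by
            rw [Finset.sum_sdiff_eq_sub hsub]
            rfl
    rw [Finset.sum_congr rfl (fun p _ => hinner p), Fintype.sum_prod_type]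
    have hc : ∀ c : C, ∑ k : Fin (w.length + 1), q (w.insertIdx (k : ℕ) c) *
          ((muS mu (SsetL R (w.take (k : ℕ) ++ [c])) - muS mu (SsetL R (w.take (k : ℕ)))) / D)
        = lam c * q w / D := by
      intro c
      rw [Fin.sum_univ_eq_sum_range (fun k => q (w.insertIdx k c) *
        ((muS mu (SsetL R (w.take k ++ [c])) - muS mu (SsetL R (w.take k))) / D)) (w.length + 1)]
      simp only [← mul_div_assoc]
      rw [← Finset.sum_div, hqdef, keyIns0 R lam mu hlam hmu hScne w c]
    rw [Finset.sum_congr rfl (fun c _ => hc c), ← Finset.sum_div, ← Finset.sum_mul]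
  rw [hA, Finset.sum_congr rfl (fun s _ => hB s), Finset.sum_add_distrib, hN, hI]
  rw [hDdef]
  field_simp
  have hX : (∑ c' : C, lam c' + ∑ s' : S, mu s') ≠ 0 := hD.ne'
  rw [div_eq_iff hX]
  ring
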